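/- Let Z ⊂ ℝ^d be nonempty and compact and suppose there exist constants v_∧ ∈ (0,1] and σ_∨ > 0 such that Leb({u ∈ Z : |z−u| ≤ r}) ≥ v_∧ V_d(r) for every z ∈ Z and every r ∈ (0, σ_∨ √d]. Then for every σ ∈ (0, σ_∨], every z ∈ Z, and R := σ√d, one has ∫_{{u ∈ Z : |z−u| ≤ R}} exp(−|z−u|²/(2σ²)) du ≥ v_∧ ∫_{{u ∈ ℝ^d : |u| ≤ R}} exp(−|u|²/(2σ²)) du, where the integrals are with respect to d-dimensional Lebesgue measure. -/

import Mathlib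

open MeasureTheory


lemma vb_aux {d : ℕ} (hd : 0 < d) (x : EuclideanSpace ℝ (Fin d)) {r : ℝ} (hr : 0 ≤ r) :
    volume (Metric.ball x r) =
      ENNReal.ofReal (Real.pi ^ ((d : ℝ) / 2) * r ^ (d : ℕ) / Real.Gamma ((d : ℝ) / 2 + 1)) := by
  haveI : Nonempty (Fin d) := ⟨⟨0, hd⟩⟩
  rw [EuclideanSpace.volume_ball, Fintype.card_fin, ← ENNReal.ofReal_pow hr,
    ← ENNReal.ofReal_mul (pow_nonneg hr _)]
  congr 1
  have hpi : Real.sqrt Real.pi ^ d = Real.pi ^ ((d : ℝ) / 2) := by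
    rw [Real.sqrt_eq_rpow, ← Real.rpow_natCast (Real.pi ^ (1 / (2:ℝ))) d,
      ← Real.rpow_mul Real.pi_pos.le]
    ring_nf
  rw [hpi]
  ring

lemma nontriv_aux {d : ℕ} (hd : 0 < d) : Nontrivial (EuclideanSpace ℝ (Fin d)) :=
  Module.nontrivial_of_finrank_pos (R := ℝ)
    (by rw [finrank_euclideanSpace_fin]; exact hd)

lemma vb_aux_closed {d : ℕ} (hd : 0 < d) (x : EuclideanSpace ℝ (Fin d)) {r : ℝ} (hr : 0 ≤ r) :
    volume (Metric.closedBall x r) =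
      ENNReal.ofReal (Real.pi ^ ((d : ℝ) / 2) * r ^ (d : ℕ) / Real.Gamma ((d : ℝ) / 2 + 1)) := by
  haveI := nontriv_aux hd
  rw [Measure.addHaar_closedBall_eq_addHaar_ball, vb_aux hd x hr]

lemma level_aux {σ t x : ℝ} (hσ : 0 < σ) (ht0 : 0 < t) (hx : 0 ≤ x) :
    t < Real.exp (-x ^ 2 / (2 * σ ^ 2)) ↔
      x < Real.sqrt (2 * σ ^ 2 * (-Real.log t)) := by
  have h2 : 0 < 2 * σ ^ 2 := by positivity
  rw [← Real.log_lt_iff_lt_exp ht0, lt_div_iff₀ h2, Real.lt_sqrt hx]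
  constructor <;> intro h <;> nlinarith

/-- volume of a closed local piece equals open local piece. -/
lemma open_closed_aux {d : ℕ} (hd : 0 < d) (Z : Set (EuclideanSpace ℝ (Fin d)))
    (z : EuclideanSpace ℝ (Fin d)) (r : ℝ) :
    volume {u | u ∈ Z ∧ dist z u ≤ r} = volume {u | u ∈ Z ∧ dist z u < r} := by
  haveI := nontriv_aux hd
  apply le_antisymm
  · calc volume {u | u ∈ Z ∧ dist z u ≤ r}
        ≤ volume ({u | u ∈ Z ∧ dist z u < r} ∪ Metric.sphere z r) := by
          apply measure_mono
          rintro u ⟨huZ, hur⟩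
          rcases lt_or_eq_of_le hur with h | h
          · exact Or.inl ⟨huZ, h⟩
          · refine Or.inr ?_
            show dist u z = r
            rw [dist_comm]
            exact h
      _ ≤ volume {u | u ∈ Z ∧ dist z u < r} + volume (Metric.sphere z r) :=
          measure_union_le _ _
      _ = volume {u | u ∈ Z ∧ dist z u < r} := by
          rw [Measure.addHaar_sphere, add_zero]
  · exact measure_mono fun u ⟨h1, h2⟩ => ⟨h1, h2.le⟩

/-- layer-cake volume comparison: under the uniform local volume
condition on `Z ⊂ ℝ^d`, for every `σ ∈ (0, σ_∨]`, `z ∈ Z` and `R = σ√d`,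
`∫_{u∈Z, |z−u|≤R} e^{−|z−u|²/(2σ²)} du ≥ v_∧ ∫_{|u|≤R} e^{−|u|²/(2σ²)} du`. -/
theorem local_gaussian_mass_lower_bound
    {d : ℕ} (Z : Set (EuclideanSpace ℝ (Fin d)))
    (hZne : Z.Nonempty) (hZc : IsCompact Z)
    (vmin σmax : ℝ) (hv0 : 0 < vmin) (hv1 : vmin ≤ 1) (hσmax : 0 < σmax)
    (hvol : ∀ z ∈ Z, ∀ r : ℝ, 0 < r → r ≤ σmax * Real.sqrt d →
      ENNReal.ofReal (vmin *
          (Real.pi ^ ((d : ℝ) / 2) * r ^ (d : ℕ) / Real.Gamma ((d : ℝ) / 2 + 1))) ≤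
        volume {u : EuclideanSpace ℝ (Fin d) | u ∈ Z ∧ dist z u ≤ r}) :
    ∀ σ : ℝ, 0 < σ → σ ≤ σmax → ∀ z ∈ Z,
      vmin * ∫ u in {u : EuclideanSpace ℝ (Fin d) | ‖u‖ ≤ σ * Real.sqrt d},
          Real.exp (-‖u‖ ^ 2 / (2 * σ ^ 2)) ≤
      ∫ u in {u : EuclideanSpace ℝ (Fin d) | u ∈ Z ∧ dist z u ≤ σ * Real.sqrt d},
          Real.exp (-dist z u ^ 2 / (2 * σ ^ 2)) := by

  intro σ hσ hσle z hz
  rcases Nat.eq_zero_or_pos d with hd | hd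
  · -- degenerate zero-dimensional case
    subst hd
    haveI : Subsingleton (EuclideanSpace ℝ (Fin 0)) := by
      constructor; intro a b; ext i; exact absurd i.2 (by simp)
    have hdz : ∀ u : EuclideanSpace ℝ (Fin 0), dist z u = ‖u‖ := fun u => by
      rw [dist_eq_zero.mpr (Subsingleton.elim z u), (norm_eq_zero (a := u)).mpr
        (Subsingleton.elim u 0)]
    have hsets : {u : EuclideanSpace ℝ (Fin 0) | u ∈ Z ∧ dist z u ≤ σ * Real.sqrt ((0:ℕ):ℝ)}
        = {u : EuclideanSpace ℝ (Fin 0) | ‖u‖ ≤ σ * Real.sqrt ((0:ℕ):ℝ)} := by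
      ext u
      simp only [Set.mem_setOf_eq, hdz u]
      exact ⟨fun h => h.2, fun h => ⟨Subsingleton.elim u z ▸ hz, h⟩⟩
    rw [hsets]
    have hint : (∫ u in {u : EuclideanSpace ℝ (Fin 0) | ‖u‖ ≤ σ * Real.sqrt ((0:ℕ):ℝ)},
        Real.exp (-dist z u ^ 2 / (2 * σ ^ 2)))
        = ∫ u in {u : EuclideanSpace ℝ (Fin 0) | ‖u‖ ≤ σ * Real.sqrt ((0:ℕ):ℝ)},
        Real.exp (-‖u‖ ^ 2 / (2 * σ ^ 2)) := by
      apply integral_congr_ae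
      filter_upwards with u
      rw [hdz u]
    rw [hint]
    have hnn : 0 ≤ ∫ u in {u : EuclideanSpace ℝ (Fin 0) | ‖u‖ ≤ σ * Real.sqrt ((0:ℕ):ℝ)},
        Real.exp (-‖u‖ ^ 2 / (2 * σ ^ 2)) :=
      integral_nonneg fun u => (Real.exp_pos _).le
    nlinarith
  · -- main case d ≥ 1
    haveI := nontriv_aux hd
    set R : ℝ := σ * Real.sqrt d with hR
    have hsd : 0 < Real.sqrt d := Real.sqrt_pos.mpr (by exact_mod_cast hd)
    have hR0 : 0 < R := mul_pos hσ hsd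
    have hRmax : R ≤ σmax * Real.sqrt d := by
      apply mul_le_mul_of_nonneg_right hσle hsd.le
    set A : Set (EuclideanSpace ℝ (Fin d)) := {u | u ∈ Z ∧ dist z u ≤ R} with hA
    set B : Set (EuclideanSpace ℝ (Fin d)) := {u | ‖u‖ ≤ R} with hB
    have hBeq : B = Metric.closedBall 0 R := by
      ext u; simp [hB, Metric.mem_closedBall, dist_zero_right]
    have hAm : MeasurableSet A := by
      have : A = Z ∩ Metric.closedBall z R := by
        ext u; simp [hA, Metric.mem_closedBall, dist_comm]
      rw [this]
      exact (hZc.isClosed.inter Metric.isClosed_closedBall).measurableSet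
    have hBm : MeasurableSet B := by rw [hBeq]; exact Metric.isClosed_closedBall.measurableSet
    set f : EuclideanSpace ℝ (Fin d) → ℝ := fun u => Real.exp (-dist z u ^ 2 / (2 * σ ^ 2))
      with hf
    set g : EuclideanSpace ℝ (Fin d) → ℝ := fun u => Real.exp (-‖u‖ ^ 2 / (2 * σ ^ 2)) with hg
    have hfc : Continuous f := by
      apply Real.continuous_exp.comp
      exact (((continuous_const.dist continuous_id).pow 2).neg).div_const _
    have hgc : Continuous g := by
      apply Real.continuous_exp.comp
      exact ((continuous_norm.pow 2).neg).div_const _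
    -- superlevel comparison
    have key : ∀ t ∈ Set.Ioi (0:ℝ),
        ENNReal.ofReal vmin * volume ({u | t < g u} ∩ B) ≤ volume ({u | t < f u} ∩ A) := by
      intro t ht
      rw [Set.mem_Ioi] at ht
      rcases le_or_gt 1 t with ht1 | ht1
      · have : {u : EuclideanSpace ℝ (Fin d) | t < g u} = ∅ := by
          ext u
          simp only [Set.mem_setOf_eq, Set.mem_empty_iff_false, iff_false, not_lt, hg]
          calc g u ≤ 1 := Real.exp_le_one_iff.mpr (by
                apply div_nonpos_of_nonpos_of_nonneg
                · simp [sq_nonneg]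
                · positivity)
            _ ≤ t := ht1
        rw [this, Set.empty_inter, measure_empty, mul_zero]
        exact zero_le
      · set r : ℝ := Real.sqrt (2 * σ ^ 2 * (-Real.log t)) with hr
        have hlt0 : 0 < -Real.log t := by
          simpa using Real.log_neg ht ht1
        have hr0 : 0 < r := Real.sqrt_pos.mpr (by positivity)
        have hgset : {u : EuclideanSpace ℝ (Fin d) | t < g u} = Metric.ball 0 r := by
          ext u
          simp only [Set.mem_setOf_eq, mem_ball_zero_iff, hg]
          exact level_aux hσ ht (norm_nonneg u)
        have hfset : {u : EuclideanSpace ℝ (Fin d) | t < f u} = {u | dist z u < r} := by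
          ext u
          simp only [Set.mem_setOf_eq, hf]
          exact level_aux hσ ht dist_nonneg
        rcases le_or_gt r R with hrR | hrR
        · -- small radius
          have h1 : {u : EuclideanSpace ℝ (Fin d) | t < g u} ∩ B = Metric.ball 0 r := by
            rw [hgset]
            apply Set.inter_eq_self_of_subset_left
            intro u hu
            rw [mem_ball_zero_iff] at hu
            exact le_trans hu.le hrR
          have h2 : {u : EuclideanSpace ℝ (Fin d) | t < f u} ∩ A
              = {u | u ∈ Z ∧ dist z u < r} := by
            rw [hfset]
            ext u
            simp only [Set.mem_inter_iff, Set.mem_setOf_eq]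
            constructor
            · rintro ⟨h3, h4, _⟩; exact ⟨h4, h3⟩
            · rintro ⟨h3, h4⟩; exact ⟨h4, h3, le_trans h4.le hrR⟩
          rw [h1, h2, vb_aux hd 0 hr0.le, ← open_closed_aux hd,
            ← ENNReal.ofReal_mul hv0.le]
          exact hvol z hz r hr0 (le_trans hrR hRmax)
        · -- large radius
          have h1 : {u : EuclideanSpace ℝ (Fin d) | t < g u} ∩ B = B := by
            apply Set.inter_eq_self_of_subset_right
            intro u hu
            have hu' : ‖u‖ ≤ R := hu
            rw [hgset, mem_ball_zero_iff]
            exact lt_of_le_of_lt hu' hrR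
          have h2 : {u : EuclideanSpace ℝ (Fin d) | t < f u} ∩ A = A := by
            apply Set.inter_eq_self_of_subset_right
            intro u hu
            have hu' : dist z u ≤ R := hu.2
            rw [hfset]
            exact lt_of_le_of_lt hu' hrR
          rw [h1, h2, hBeq, vb_aux_closed hd 0 hR0.le, ← ENNReal.ofReal_mul hv0.le]
          exact hvol z hz R hR0 hRmax
    -- layer cake on both sides
    have hLB : ∫⁻ u in B, ENNReal.ofReal (g u) = ∫⁻ t in Set.Ioi 0, volume ({u | t < g u} ∩ B) := by
      rw [lintegral_eq_lintegral_meas_lt (volume.restrict B)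
        (Filter.Eventually.of_forall fun u => (Real.exp_pos _).le)
        hgc.aemeasurable]
      apply lintegral_congr_ae
      filter_upwards with t
      rw [Measure.restrict_apply (measurableSet_lt measurable_const hgc.measurable)]
    have hLA : ∫⁻ u in A, ENNReal.ofReal (f u) = ∫⁻ t in Set.Ioi 0, volume ({u | t < f u} ∩ A) := by
      rw [lintegral_eq_lintegral_meas_lt (volume.restrict A)
        (Filter.Eventually.of_forall fun u => (Real.exp_pos _).le)
        hfc.aemeasurable]
      apply lintegral_congr_ae
      filter_upwards with t
      rw [Measure.restrict_apply (measurableSet_lt measurable_const hfc.measurable)]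
    have hmain : ENNReal.ofReal vmin * ∫⁻ u in B, ENNReal.ofReal (g u)
        ≤ ∫⁻ u in A, ENNReal.ofReal (f u) := by
      rw [hLB, hLA, ← lintegral_const_mul' _ _ ENNReal.ofReal_ne_top]
      exact setLIntegral_mono' measurableSet_Ioi key
    -- finiteness
    have hAfin : (∫⁻ u in A, ENNReal.ofReal (f u)) ≠ ⊤ := by
      apply ne_of_lt
      calc ∫⁻ u in A, ENNReal.ofReal (f u) ≤ ∫⁻ _ in A, 1 := by
            apply lintegral_mono
            intro u
            apply ENNReal.ofReal_le_one.mpr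
            apply Real.exp_le_one_iff.mpr
            apply div_nonpos_of_nonpos_of_nonneg
            · simp [sq_nonneg]
            · positivity
        _ = volume A := by simp
        _ ≤ volume (Metric.closedBall z R) := by
            apply measure_mono
            rintro u ⟨_, hu⟩
            rw [Metric.mem_closedBall, dist_comm]
            exact hu
        _ < ⊤ := measure_closedBall_lt_top
    -- convert to real integrals
    have hIB : ∫ u in B, g u = (∫⁻ u in B, ENNReal.ofReal (g u)).toReal := by
      apply integral_eq_lintegral_of_nonneg_ae
      · exact Filter.Eventually.of_forall fun u => (Real.exp_pos _).le
      · exact hgc.aestronglyMeasurable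
    have hIA : ∫ u in A, f u = (∫⁻ u in A, ENNReal.ofReal (f u)).toReal := by
      apply integral_eq_lintegral_of_nonneg_ae
      · exact Filter.Eventually.of_forall fun u => (Real.exp_pos _).le
      · exact hfc.aestronglyMeasurable
    calc vmin * ∫ u in B, g u
        = (ENNReal.ofReal vmin * ∫⁻ u in B, ENNReal.ofReal (g u)).toReal := by
          rw [ENNReal.toReal_mul, ENNReal.toReal_ofReal hv0.le, hIB]
      _ ≤ (∫⁻ u in A, ENNReal.ofReal (f u)).toReal := ENNReal.toReal_mono hAfin hmain
      _ = ∫ u in A, f u := hIA.symm
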